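/- For the compact group SU(2) with spherical polynomial φ_{m,l}(g) = C(m,k) ⟨g(e₁^k e₂^{m-k}), e₁^k e₂^{m-k}⟩ where l = m - 2k and C(m,k) is the binomial coefficient, the following recurrence holds: ⟨g e₂, e₁⟩ (E⁺ φ_{m,l})(g) = (1/4) · ((m+l)(m-l+2)/(m+1)) · (φ_{m+1,l-1}(g) − φ_{m-1,l-1}(g)), where E⁺ acts by right differentiation on functions on SL(2,ℂ). -/

import Mathlib

/- SL(2,ℂ) acts on the m-th symmetric power Sᵐ(ℂ²).  In the orthogonal monomial basis
`e₁^j ⊙ e₂^{m-j}` (with the inner product induced from ℂ², normalized so that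
`binom(m,k)‖e₁^k ⊙ e₂^{m-k}‖² = 1`), the spherical matrix coefficient
`φ_{m,l}(g) = binom(m,k)·⟨g(e₁^k ⊙ e₂^{m-k}), e₁^k ⊙ e₂^{m-k}⟩`, with `l = m − 2k`,
equals the coefficient of `e₁^k ⊙ e₂^{m-k}` in `(g e₁)^{⊙k} ⊙ (g e₂)^{⊙(m-k)}`,
which is the explicit polynomial in the entries of `g` below. -/
noncomputable def phi (m k : ℕ) (g : Matrix (Fin 2) (Fin 2) ℂ) : ℂ :=
  ∑ i ∈ Finset.range (k + 1),
    (Nat.choose k i : ℂ) * (Nat.choose (m - k) (k - i) : ℂ) *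
      g 0 0 ^ i * g 1 0 ^ (k - i) * g 0 1 ^ (k - i) * g 1 1 ^ ((m - k) - (k - i))

/-- Right differentiation by `E⁺ = E₁₂` of a function on SL(2,ℂ):
`(E⁺ f)(g) = d/ds f(g·exp(sE⁺))|₀`, where `exp(sE⁺) = 1 + sE⁺`. -/
noncomputable def rightDerivEplus (f : Matrix (Fin 2) (Fin 2) ℂ → ℂ)
    (g : Matrix (Fin 2) (Fin 2) ℂ) : ℂ :=
  deriv (fun s : ℂ => f (g * (1 + s • (!![0, 1; 0, 0] : Matrix (Fin 2) (Fin 2) ℂ)))) 0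



open Finset

lemma scalar1 (m k j : ℕ) (hm : 1 ≤ m) (hk : k ≤ m) (hj : 1 ≤ j) (hjk : j ≤ k + 1) :
    ((m : ℂ) + 1) * ((k.choose (j-1) : ℂ) * ((m-k).choose (k+1-j) : ℂ) * ((k+1-j : ℕ) : ℂ)
        + (k.choose j : ℂ) * ((m-k).choose (k-j) : ℂ) * (((m-k)-(k-j) : ℕ) : ℂ))
      + ((m-k : ℕ) : ℂ) * ((k : ℂ) + 1) * ((k.choose (j-1) : ℂ) * ((m-1-k).choose (k+1-j) : ℂ))
    = ((m-k : ℕ) : ℂ) * ((k : ℂ) + 1) * (((k+1).choose j : ℂ) * ((m-k).choose (k+1-j) : ℂ)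
        + (k.choose j : ℂ) * ((m-1-k).choose (k-j) : ℂ)) := by
  obtain ⟨j', rfl⟩ : ∃ j', j = j' + 1 := ⟨j - 1, by omega⟩
  by_cases hcase : k + 1 - (j'+1) ≤ m - k
  · by_cases hjk' : j' + 1 ≤ k
    · -- generic in-range case
      obtain ⟨r, hr⟩ : ∃ r, k = j' + 1 + r := ⟨k - (j'+1), by omega⟩
      obtain ⟨t, ht⟩ : ∃ t, m = k + (r + 1 + t) := ⟨m - k - (r+1), by omega⟩
      subst ht; subst hr
      rw [show j' + 1 + r + (r + 1 + t) - (j' + 1 + r) = r + t + 1 from by omega,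
        show j' + 1 + r + 1 - (j' + 1) = r + 1 from by omega,
        show j' + 1 + r - (j' + 1) = r from by omega,
        show j' + 1 + r + (r + 1 + t) - 1 - (j' + 1 + r) = r + t from by omega,
        show j' + 1 - 1 = j' from by omega,
        show r + t + 1 - r = t + 1 from by omega]
      have hr1 : ((r : ℂ) + 1) ≠ 0 := Nat.cast_add_one_ne_zero r
      have ht1 : ((t : ℂ) + 1) ≠ 0 := Nat.cast_add_one_ne_zero t
      have hj1 : ((j' : ℂ) + 1) ≠ 0 := Nat.cast_add_one_ne_zero j'
      -- cast recurrences
      have c1 : ((j'+1+r).choose j' : ℂ) * ((r:ℂ)+1) = ((j'+1+r).choose (j'+1) : ℂ) * ((j':ℂ)+1) := by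
        have := Nat.choose_succ_right_eq (j'+1+r) j'
        rw [show j'+1+r - j' = r + 1 from by omega] at this
        exact_mod_cast this.symm
      have c2 : ((r+t+1).choose (r+1) : ℂ) * ((r:ℂ)+1) = ((r+t).choose r : ℂ) * ((r:ℂ)+(t:ℂ)+1) := by
        have := Nat.add_one_mul_choose_eq (r+t) r
        have := congrArg (fun n : ℕ => (n : ℂ)) this
        push_cast [Nat.succ_eq_add_one] at this
        linear_combination -this
      have c3 : ((r+t+1).choose r : ℂ) * ((t:ℂ)+1) = ((r+t).choose r : ℂ) * ((r:ℂ)+(t:ℂ)+1) := by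
        have h1 := Nat.choose_succ_right_eq (r+t+1) r
        rw [show r+t+1 - r = t + 1 from by omega] at h1
        have h1 := congrArg (fun n : ℕ => (n : ℂ)) h1
        have h2 := Nat.add_one_mul_choose_eq (r+t) r
        have h2 := congrArg (fun n : ℕ => (n : ℂ)) h2
        push_cast [Nat.succ_eq_add_one] at h1 h2
        linear_combination -h1 - h2
      have c4 : ((j'+1+r+1).choose (j'+1) : ℂ) * ((j':ℂ)+1) = ((j':ℂ)+(r:ℂ)+2) * ((j'+1+r).choose j' : ℂ) := by
        have := Nat.add_one_mul_choose_eq (j'+1+r) j'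
        have := congrArg (fun n : ℕ => (n : ℂ)) this
        push_cast [Nat.succ_eq_add_one] at this
        linear_combination -this
      have c5 : ((r+t).choose (r+1) : ℂ) * ((r:ℂ)+1) = ((r+t).choose r : ℂ) * (t:ℂ) := by
        have := Nat.choose_succ_right_eq (r+t) r
        rw [show r+t - r = t from by omega] at this
        exact_mod_cast this
      -- express via A, B
      have e1 : ((j'+1+r).choose j' : ℂ) = ((j'+1+r).choose (j'+1) : ℂ) * ((j':ℂ)+1) / ((r:ℂ)+1) := by
        rw [eq_div_iff hr1]; linear_combination c1
      have e2 : ((r+t+1).choose (r+1) : ℂ) = ((r+t).choose r : ℂ) * ((r:ℂ)+(t:ℂ)+1) / ((r:ℂ)+1) := by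
        rw [eq_div_iff hr1]; linear_combination c2
      have e3 : ((r+t+1).choose r : ℂ) = ((r+t).choose r : ℂ) * ((r:ℂ)+(t:ℂ)+1) / ((t:ℂ)+1) := by
        rw [eq_div_iff ht1]; linear_combination c3
      have e4 : ((j'+1+r+1).choose (j'+1) : ℂ) = ((j':ℂ)+(r:ℂ)+2) * ((j'+1+r).choose j' : ℂ) / ((j':ℂ)+1) := by
        rw [eq_div_iff hj1]; linear_combination c4
      have e5 : ((r+t).choose (r+1) : ℂ) = ((r+t).choose r : ℂ) * (t:ℂ) / ((r:ℂ)+1) := by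
        rw [eq_div_iff hr1]; linear_combination c5
      rw [e4, e2, e3, e5, e1]
      push_cast
      field_simp
      ring
    · -- j = k+1
      have : j' = k := by omega
      subst this
      simp [Nat.choose_succ_self, Nat.sub_self]
  · -- out of range
    have hjk2 : j' + 1 ≤ k := by omega
    have h1 : (m-k).choose (k+1-(j'+1)) = 0 := Nat.choose_eq_zero_of_lt (by omega)
    have h2 : (m-1-k).choose (k+1-(j'+1)) = 0 := Nat.choose_eq_zero_of_lt (by omega)
    rw [h1, h2]
    by_cases hmk : m = k
    · rw [hmk]
      simp [Nat.sub_self]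
    · have h3 : (m-1-k).choose (k-(j'+1)) = 0 := Nat.choose_eq_zero_of_lt (by omega)
      have h4 : ((m-k) - (k - (j'+1))) = 0 := by omega
      rw [h3, h4]
      simp


lemma scalar0 (m k : ℕ) (hm : 1 ≤ m) (hk : k ≤ m) :
    ((m:ℂ)+1) * (((m-k).choose k : ℂ) * (((m-k)-k : ℕ):ℂ))
    = ((m-k:ℕ):ℂ) * ((k:ℂ)+1) * (((m-k).choose (k+1) : ℂ) + ((m-1-k).choose k : ℂ)) := by
  by_cases hc : k + 1 ≤ m - k
  · obtain ⟨t, ht⟩ : ∃ t, m = k + (k + 1 + t) := ⟨m - k - (k+1), by omega⟩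
    subst ht
    rw [show k + (k + 1 + t) - k = k + t + 1 from by omega,
      show k + t + 1 - k = t + 1 from by omega,
      show k + (k + 1 + t) - 1 - k = k + t from by omega]
    have hk1 : ((k : ℂ) + 1) ≠ 0 := Nat.cast_add_one_ne_zero k
    have hkt1 : ((k : ℂ) + (t:ℂ) + 1) ≠ 0 := by
      intro h
      have : ((k + t : ℕ) : ℂ) + 1 = 0 := by push_cast; linear_combination h
      exact Nat.cast_add_one_ne_zero (k+t) this
    have c1 : ((k+t+1).choose (k+1) : ℂ) * ((k:ℂ)+1) = ((k+t+1).choose k : ℂ) * ((t:ℂ)+1) := by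
      have := Nat.choose_succ_right_eq (k+t+1) k
      rw [show k+t+1 - k = t + 1 from by omega] at this
      exact_mod_cast this
    have c2 : ((k+t).choose k : ℂ) * ((k:ℂ)+(t:ℂ)+1) = ((k+t+1).choose k : ℂ) * ((t:ℂ)+1) := by
      have h2 := Nat.add_one_mul_choose_eq (k+t) k
      have h2 := congrArg (fun n : ℕ => (n : ℂ)) h2
      push_cast [Nat.succ_eq_add_one] at h2
      linear_combination h2 + c1
    have e1 : ((k+t+1).choose (k+1) : ℂ) = ((k+t+1).choose k : ℂ) * ((t:ℂ)+1) / ((k:ℂ)+1) := by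
      rw [eq_div_iff hk1]; linear_combination c1
    have e2 : ((k+t).choose k : ℂ) = ((k+t+1).choose k : ℂ) * ((t:ℂ)+1) / ((k:ℂ)+(t:ℂ)+1) := by
      rw [eq_div_iff hkt1]; linear_combination c2
    rw [e1, e2]
    push_cast
    field_simp
    ring
  · by_cases hmk : m = k
    · rw [show m - k = 0 from by omega]
      simp
    · by_cases hlt : m - k < k
      · have h1 : (m-k).choose k = 0 := Nat.choose_eq_zero_of_lt hlt
        have h2 : (m-k).choose (k+1) = 0 := Nat.choose_eq_zero_of_lt (by omega)
        have h3 : (m-1-k).choose k = 0 := Nat.choose_eq_zero_of_lt (by omega)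
        rw [h1, h2, h3]; simp
      · -- m - k = k
        have hek : m - k = k := by omega
        have h2 : (m-k).choose (k+1) = 0 := Nat.choose_eq_zero_of_lt (by omega)
        have h3 : (m-1-k).choose k = 0 := Nat.choose_eq_zero_of_lt (by omega)
        rw [h2, h3, hek, Nat.sub_self]; simp

lemma matmul_entries (g : Matrix (Fin 2) (Fin 2) ℂ) (s : ℂ) :
    g * (1 + s • (!![0, 1; 0, 0] : Matrix (Fin 2) (Fin 2) ℂ)) =
      !![g 0 0, g 0 1 + s * g 0 0; g 1 0, g 1 1 + s * g 1 0] := by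
  have h1 : (1 + s • (!![0, 1; 0, 0] : Matrix (Fin 2) (Fin 2) ℂ)) = !![1, s; 0, 1] := by
    ext i j
    fin_cases i <;> fin_cases j <;>
      simp [Matrix.one_apply]
  rw [h1]
  ext i j
  fin_cases i <;> fin_cases j <;>
    simp [Matrix.mul_apply, Fin.sum_univ_two] <;> ring

lemma deriv_phi (m k : ℕ) (g : Matrix (Fin 2) (Fin 2) ℂ) :
    rightDerivEplus (phi m k) g = ∑ i ∈ Finset.range (k + 1),
      (Nat.choose k i : ℂ) * (Nat.choose (m - k) (k - i) : ℂ) * g 0 0 ^ i * g 1 0 ^ (k - i) *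
        (((k - i : ℕ) : ℂ) * g 0 1 ^ (k - i - 1) * g 0 0 * g 1 1 ^ ((m - k) - (k - i))
          + g 0 1 ^ (k - i) * (((m - k) - (k - i) : ℕ) : ℂ) * g 1 1 ^ ((m - k) - (k - i) - 1) * g 1 0) := by
  unfold rightDerivEplus
  have hfun : (fun s : ℂ => phi m k (g * (1 + s • (!![0, 1; 0, 0] : Matrix (Fin 2) (Fin 2) ℂ)))) =
      fun s : ℂ => ∑ i ∈ Finset.range (k + 1),
        (Nat.choose k i : ℂ) * (Nat.choose (m - k) (k - i) : ℂ) * g 0 0 ^ i * g 1 0 ^ (k - i) *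
          ((g 0 1 + s * g 0 0) ^ (k - i) * (g 1 1 + s * g 1 0) ^ ((m - k) - (k - i))) := by
    funext s
    rw [matmul_entries, phi]
    refine Finset.sum_congr rfl fun i _ => ?_
    simp
    ring
  rw [hfun]
  have H : HasDerivAt (fun s : ℂ => ∑ i ∈ Finset.range (k + 1),
      (Nat.choose k i : ℂ) * (Nat.choose (m - k) (k - i) : ℂ) * g 0 0 ^ i * g 1 0 ^ (k - i) *
        ((g 0 1 + s * g 0 0) ^ (k - i) * (g 1 1 + s * g 1 0) ^ ((m - k) - (k - i))))
      (∑ i ∈ Finset.range (k + 1),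
      (Nat.choose k i : ℂ) * (Nat.choose (m - k) (k - i) : ℂ) * g 0 0 ^ i * g 1 0 ^ (k - i) *
        ((((k - i : ℕ) : ℂ) * (g 0 1 + 0 * g 0 0) ^ (k - i - 1) * g 0 0) * (g 1 1 + 0 * g 1 0) ^ ((m - k) - (k - i))
          + (g 0 1 + 0 * g 0 0) ^ (k - i) * ((((m - k) - (k - i) : ℕ) : ℂ) * (g 1 1 + 0 * g 1 0) ^ ((m - k) - (k - i) - 1) * g 1 0))) 0 := by
    refine HasDerivAt.fun_sum fun i _ => ?_
    have hb : HasDerivAt (fun s : ℂ => g 0 1 + s * g 0 0) (g 0 0) 0 := by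
      simpa using ((hasDerivAt_id (0:ℂ)).mul_const (g 0 0)).const_add (g 0 1)
    have hd : HasDerivAt (fun s : ℂ => g 1 1 + s * g 1 0) (g 1 0) 0 := by
      simpa using ((hasDerivAt_id (0:ℂ)).mul_const (g 1 0)).const_add (g 1 1)
    exact ((hb.pow (k - i)).mul (hd.pow ((m - k) - (k - i)))).const_mul _
  rw [H.deriv]
  refine Finset.sum_congr rfl fun i _ => ?_
  ring

noncomputable def Uc (m k : ℕ) (a b c d : ℂ) (j : ℕ) : ℂ :=
  a ^ j * b ^ (k+1-j) * c ^ (k+1-j) * d ^ ((m-k)-(k+1-j))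

noncomputable def xc (m k i : ℕ) : ℂ :=
  ((m:ℂ)+1) * (k.choose i : ℂ) * ((m-k).choose (k-i) : ℂ) * ((k-i : ℕ):ℂ)

noncomputable def yc (m k i : ℕ) : ℂ :=
  ((m:ℂ)+1) * (k.choose i : ℂ) * ((m-k).choose (k-i) : ℂ) * (((m-k)-(k-i) : ℕ):ℂ)

noncomputable def pc (m k j : ℕ) : ℂ :=
  ((k+1).choose j : ℂ) * ((m-k).choose (k+1-j) : ℂ)

noncomputable def qc (m k i : ℕ) : ℂ :=
  (k.choose i : ℂ) * ((m-1-k).choose (k-i) : ℂ)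

noncomputable def Nc (m k : ℕ) : ℂ := ((m-k : ℕ):ℂ) * ((k:ℂ)+1)

noncomputable def vc (m k : ℕ) (a b c d : ℂ) (i : ℕ) : ℂ :=
  Nc m k * (qc m k i * Uc m k a b c d i) - yc m k i * Uc m k a b c d i


lemma key (m k : ℕ) (hk : k ≤ m) (a b c d : ℂ) (hdet : a * d - b * c = 1) :
    ((m:ℂ)+1) * (b * ∑ i ∈ range (k+1),
        (k.choose i : ℂ) * ((m-k).choose (k-i) : ℂ) * a ^ i * c ^ (k-i) *
          (((k-i : ℕ):ℂ) * b ^ (k-i-1) * a * d ^ ((m-k)-(k-i))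
            + b ^ (k-i) * (((m-k)-(k-i) : ℕ):ℂ) * d ^ ((m-k)-(k-i)-1) * c))
    = Nc m k *
        ((∑ j ∈ range (k+2), ((k+1).choose j : ℂ) * ((m-k).choose (k+1-j) : ℂ) * a ^ j * c ^ (k+1-j) * b ^ (k+1-j) * d ^ ((m-k)-(k+1-j)))
         - ∑ i ∈ range (k+1), (k.choose i : ℂ) * ((m-1-k).choose (k-i) : ℂ) * a ^ i * c ^ (k-i) * b ^ (k-i) * d ^ ((m-1-k)-(k-i))) := by
  rcases eq_or_lt_of_le hk with hmk | hmk
  · -- m = k : both sides vanish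
    have hz : ∀ i ∈ range (k+1),
        (k.choose i : ℂ) * ((m-k).choose (k-i) : ℂ) * a ^ i * c ^ (k-i) *
          (((k-i : ℕ):ℂ) * b ^ (k-i-1) * a * d ^ ((m-k)-(k-i))
            + b ^ (k-i) * (((m-k)-(k-i) : ℕ):ℂ) * d ^ ((m-k)-(k-i)-1) * c) = 0 := by
      intro i hi
      have hik : i ≤ k := by have := Finset.mem_range.mp hi; omega
      rcases Nat.lt_or_ge i k with hlt | hge
      · have : (m-k).choose (k-i) = 0 := by
          apply Nat.choose_eq_zero_of_lt; omega
        simp [this]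
      · have h1 : k - i = 0 := by omega
        have h2 : m - k = 0 := by omega
        rw [h1, h2]
        simp
    rw [Finset.sum_eq_zero hz]
    simp [Nc, show m - k = 0 from by omega]
  have hm : 1 ≤ m := by omega
  -- abbreviations
  set U := Uc m k a b c d with hU
  -- Step A : expand LHS
  have hA : ((m:ℂ)+1) * (b * ∑ i ∈ range (k+1),
        (k.choose i : ℂ) * ((m-k).choose (k-i) : ℂ) * a ^ i * c ^ (k-i) *
          (((k-i : ℕ):ℂ) * b ^ (k-i-1) * a * d ^ ((m-k)-(k-i))
            + b ^ (k-i) * (((m-k)-(k-i) : ℕ):ℂ) * d ^ ((m-k)-(k-i)-1) * c))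
      = (∑ i ∈ range (k+1), xc m k i * U (i+1)) + ∑ i ∈ range (k+1), yc m k i * U i := by
    rw [Finset.mul_sum, Finset.mul_sum, ← Finset.sum_add_distrib]
    refine Finset.sum_congr rfl fun i hi => ?_
    have hik : i ≤ k := by
      have := Finset.mem_range.mp hi; omega
    rcases Nat.lt_or_ge i k with hlt | hge
    · obtain ⟨p', hp⟩ : ∃ p', k - i = p' + 1 := ⟨k - i - 1, by omega⟩
      rw [hU]
      simp only [xc, yc, Uc, hp,
        show k + 1 - (i+1) = p' + 1 from by omega,
        show k + 1 - i = p' + 2 from by omega,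
        show p' + 1 - 1 = p' from by omega,
        show (m-k) - (p'+1) - 1 = (m-k) - (p'+2) from by omega,
        show (m-k) - (k+1-(i+1)) = (m-k) - (p'+1) from by omega,
        show (m-k) - (k+1-i) = (m-k) - (p'+2) from by omega]
      push_cast
      ring
    · rw [hU]
      simp only [xc, yc, Uc,
        show k - i = 0 from by omega,
        show k + 1 - (i+1) = 0 from by omega,
        show k + 1 - i = 1 from by omega, Nat.sub_zero]
      push_cast
      ring
  -- Step P
  have hP : (∑ j ∈ range (k+2), ((k+1).choose j : ℂ) * ((m-k).choose (k+1-j) : ℂ) * a ^ j * c ^ (k+1-j) * b ^ (k+1-j) * d ^ ((m-k)-(k+1-j)))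
      = ∑ j ∈ range (k+2), pc m k j * U j := by
    refine Finset.sum_congr rfl fun j hj => ?_
    rw [hU]; simp only [pc, Uc]; ring
  -- Step Q
  have hQ : (∑ i ∈ range (k+1), (k.choose i : ℂ) * ((m-1-k).choose (k-i) : ℂ) * a ^ i * c ^ (k-i) * b ^ (k-i) * d ^ ((m-1-k)-(k-i)))
      = (∑ i ∈ range (k+1), qc m k i * U (i+1)) - ∑ i ∈ range (k+1), qc m k i * U i := by
    rw [← Finset.sum_sub_distrib]
    refine Finset.sum_congr rfl fun i hi => ?_
    have hik : i ≤ k := by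
      have := Finset.mem_range.mp hi; omega
    by_cases hq : k - i ≤ m - 1 - k
    · have step : (k.choose i : ℂ) * ((m-1-k).choose (k-i) : ℂ) * a ^ i * c ^ (k-i) * b ^ (k-i) * d ^ ((m-1-k)-(k-i))
          = (k.choose i : ℂ) * ((m-1-k).choose (k-i) : ℂ) * a ^ i * c ^ (k-i) * b ^ (k-i) * d ^ ((m-1-k)-(k-i)) * (a * d - b * c) := by
        rw [hdet, mul_one]
      rw [step, hU]
      simp only [qc, Uc]
      rw [show (m-k) - (k+1-(i+1)) = ((m-1-k)-(k-i)) + 1 from by omega,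
        show (m-k) - (k+1-i) = (m-1-k)-(k-i) from by omega,
        show k + 1 - (i+1) = k - i from by omega,
        show k + 1 - i = (k-i) + 1 from by omega]
      ring
    · have hz : (m-1-k).choose (k-i) = 0 := Nat.choose_eq_zero_of_lt (by omega)
      rw [hU]
      simp [qc, hz]
  rw [hA, hP, hQ]
  -- split the P-sum
  have hP' := Finset.sum_range_succ' (fun j => pc m k j * U j) (k+1)
  rw [hP']
  -- the shifted-v computation
  have hE : ∑ i ∈ range (k+1), (xc m k i * U (i+1) - Nc m k * (pc m k (i+1) * U (i+1)) + Nc m k * (qc m k i * U (i+1)))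
      = ∑ i ∈ range (k+1), vc m k a b c d (i+1) := by
    refine Finset.sum_congr rfl fun i hi => ?_
    have hik : i ≤ k := by
      have := Finset.mem_range.mp hi; omega
    have h := scalar1 m k (i+1) hm hk (by omega) (by omega)
    rw [show i + 1 - 1 = i from by omega,
      show k + 1 - (i+1) = k - i from by omega] at h
    simp only [vc, xc, yc, pc, qc, Nc, hU, show k + 1 - (i+1) = k - i from by omega] at *
    linear_combination (Uc m k a b c d (i+1)) * h
  have hvk1 : vc m k a b c d (k+1) = 0 := by
    simp [vc, qc, yc, Nat.choose_succ_self]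
  have hv0 : vc m k a b c d 0 = -(Nc m k * (pc m k 0 * U 0)) := by
    have h := scalar0 m k hm hk
    simp only [vc, yc, pc, qc, Nc, hU, Nat.sub_zero, Nat.choose_zero_right, Nat.cast_one] at *
    linear_combination -(Uc m k a b c d 0) * h
  have hvsum : ∑ i ∈ range (k+1), vc m k a b c d i
      = Nc m k * (∑ i ∈ range (k+1), qc m k i * U i) - ∑ i ∈ range (k+1), yc m k i * U i := by
    simp only [vc, hU]
    rw [Finset.sum_sub_distrib, Finset.mul_sum]
  have hshift : ∑ i ∈ range (k+1), vc m k a b c d (i+1)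
      = ∑ i ∈ range (k+1), vc m k a b c d i + vc m k a b c d (k+1) - vc m k a b c d 0 := by
    have h1 := Finset.sum_range_succ' (vc m k a b c d) (k+1)
    have h2 := Finset.sum_range_succ (vc m k a b c d) (k+1)
    linear_combination h2 - h1
  -- expand hE's LHS
  have hE2 : (∑ i ∈ range (k+1), xc m k i * U (i+1))
        - Nc m k * (∑ i ∈ range (k+1), pc m k (i+1) * U (i+1))
        + Nc m k * (∑ i ∈ range (k+1), qc m k i * U (i+1))
      = Nc m k * (∑ i ∈ range (k+1), qc m k i * U i) - ∑ i ∈ range (k+1), yc m k i * U i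
        + Nc m k * (pc m k 0 * U 0) := by
    have e1 : ∑ i ∈ range (k+1), (xc m k i * U (i+1) - Nc m k * (pc m k (i+1) * U (i+1)) + Nc m k * (qc m k i * U (i+1)))
        = (∑ i ∈ range (k+1), xc m k i * U (i+1))
          - Nc m k * (∑ i ∈ range (k+1), pc m k (i+1) * U (i+1))
          + Nc m k * (∑ i ∈ range (k+1), qc m k i * U (i+1)) := by
      rw [Finset.sum_add_distrib, Finset.sum_sub_distrib, Finset.mul_sum, Finset.mul_sum]
    rw [← e1, hE, hshift, hvk1, hv0, hvsum]
    ring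
  linear_combination hE2

/-- Recurrence formula: `⟨g e₂, e₁⟩ (E⁺ φ_{m,l})(g)
  = (1/4)·((m+l)(m−l+2)/(m+1))·(φ_{m+1,l−1}(g) − φ_{m−1,l−1}(g))`.
Here `⟨g e₂, e₁⟩ = g₀₁`, `l = m − 2k`, and `φ_{m+1,l−1}`, `φ_{m−1,l−1}` correspond to
the parameters `(m+1, k+1)` and `(m−1, k)` respectively. -/
theorem spherical_recurrence_Eplus (m k : ℕ) (hk : k ≤ m) (l : ℤ)
    (hl : l = (m : ℤ) - 2 * k)
    (g : Matrix (Fin 2) (Fin 2) ℂ) (hg : g.det = 1) :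
    g 0 1 * rightDerivEplus (phi m k) g =
      (1 / 4) * ((((m : ℂ) + (l : ℂ)) * ((m : ℂ) - (l : ℂ) + 2)) / ((m : ℂ) + 1)) *
        (phi (m + 1) (k + 1) g - phi (m - 1) k g) := by
  have hdet : g 0 0 * g 1 1 - g 0 1 * g 1 0 = 1 := by
    rw [← Matrix.det_fin_two g]; exact hg
  have hm1 : ((m:ℂ) + 1) ≠ 0 := Nat.cast_add_one_ne_zero m
  have hK := key m k hk (g 0 0) (g 0 1) (g 1 0) (g 1 1) hdet
  rw [deriv_phi]
  have e1 : phi (m+1) (k+1) g = ∑ j ∈ Finset.range (k+1+1),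
      ((k+1).choose j : ℂ) * ((m-k).choose (k+1-j) : ℂ) * g 0 0 ^ j * g 1 0 ^ (k+1-j) *
        g 0 1 ^ (k+1-j) * g 1 1 ^ ((m-k)-(k+1-j)) := by
    rw [phi]
    simp only [Nat.add_sub_add_right]
  have e2 : phi (m-1) k g = ∑ i ∈ Finset.range (k+1),
      (k.choose i : ℂ) * ((m-1-k).choose (k-i) : ℂ) * g 0 0 ^ i * g 1 0 ^ (k-i) *
        g 0 1 ^ (k-i) * g 1 1 ^ ((m-1-k)-(k-i)) := by
    rw [phi]
  rw [e1, e2]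
  subst hl
  have hco : (1/4 : ℂ) * ((((m : ℂ) + (((m:ℤ) - 2*k : ℤ) : ℂ)) * ((m : ℂ) - (((m:ℤ) - 2*k : ℤ) : ℂ) + 2)) / ((m : ℂ) + 1))
      = Nc m k / ((m:ℂ)+1) := by
    simp only [Nc]
    rw [Nat.cast_sub hk]
    push_cast
    field_simp
    ring
  rw [hco, div_mul_eq_mul_div, eq_div_iff hm1]
  linear_combination hK
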